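/- Let a ∈ [0,1], let Φ_a : M₂(ℂ) → M₂(ℂ) be the dephasing channel, let H = σ₃ and E ∈ [−1,0], and write |E| = −E. Then for every δ with √(2(1 − |E|)) ≤ δ ≤ 2√(1 − |E|²), the Dobrushin curve of Φ_a satisfies F_E(δ) ≥ h_E(δ), where h_E(δ) = √[(|E| + cos(2 arccos(δ/2) + arccos|E|))² + a²(√(1 − |E|²) + sin(2 arccos(δ/2) + arccos|E|))²]. -/

import Mathlib

open scoped ComplexOrder

/-- The trace norm `‖A‖₁ = tr √(A†A)` of a complex matrix. -/
noncomputable def traceNorm {d : ℕ} (A : Matrix (Fin d) (Fin d) ℂ) : ℝ :=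
  (((Matrix.posSemidef_conjTranspose_mul_self A).1.eigenvectorUnitary : Matrix (Fin d) (Fin d) ℂ) *
    Matrix.diagonal ((fun x : ℝ => (x : ℂ)) ∘ Real.sqrt ∘ (Matrix.posSemidef_conjTranspose_mul_self A).1.eigenvalues) *
    (star ((Matrix.posSemidef_conjTranspose_mul_self A).1.eigenvectorUnitary :
      Matrix (Fin d) (Fin d) ℂ))).trace.re

/-- A density matrix: positive semidefinite with unit trace. -/
def IsDensity {d : ℕ} (ρ : Matrix (Fin d) (Fin d) ℂ) : Prop :=
  ρ.PosSemidef ∧ ρ.trace = 1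

/-- The Pauli matrix `σ₁`. -/
def pauli1 : Matrix (Fin 2) (Fin 2) ℂ := !![0, 1; 1, 0]

/-- The Pauli matrix `σ₂`. -/
def pauli2 : Matrix (Fin 2) (Fin 2) ℂ := !![0, -Complex.I; Complex.I, 0]

/-- The Pauli matrix `σ₃`. -/
def pauli3 : Matrix (Fin 2) (Fin 2) ℂ := !![1, 0; 0, -1]

/-- The dephasing channel with parameter `a`: the (complex-linear) map acting on the Pauli
basis by `α₀I + α₁σ₁ + α₂σ₂ + α₃σ₃ ↦ α₀I + a(α₁σ₁ + α₂σ₂) + α₃σ₃`. -/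
def IsDephasing (a : ℝ) (Φ : Matrix (Fin 2) (Fin 2) ℂ →ₗ[ℂ] Matrix (Fin 2) (Fin 2) ℂ) : Prop :=
  ∀ α : Fin 4 → ℝ,
    Φ ((α 0 : ℂ) • 1 + (α 1 : ℂ) • pauli1 + (α 2 : ℂ) • pauli2 + (α 3 : ℂ) • pauli3) =
      (α 0 : ℂ) • 1 + ((a : ℂ) * (α 1 : ℂ)) • pauli1 + ((a : ℂ) * (α 2 : ℂ)) • pauli2 +
        (α 3 : ℂ) • pauli3

/-- The qubit state with Bloch vector `(w₁, w₂, w₃)`: `ρ = ½(I + w₁σ₁ + w₂σ₂ + w₃σ₃)`. -/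
noncomputable def blochState (w₁ w₂ w₃ : ℝ) : Matrix (Fin 2) (Fin 2) ℂ :=
  (1 / 2 : ℂ) • ((1 : Matrix (Fin 2) (Fin 2) ℂ) +
    (w₁ : ℂ) • pauli1 + (w₂ : ℂ) • pauli2 + (w₃ : ℂ) • pauli3)

/-- The Dobrushin curve `F_E(δ)` of a map `Φ` with respect to the Hamiltonian `H` and the
energy bound `E`. -/
noncomputable def dobrushinCurve {d : ℕ}
    (Φ : Matrix (Fin d) (Fin d) ℂ → Matrix (Fin d) (Fin d) ℂ)
    (H : Matrix (Fin d) (Fin d) ℂ) (E δ : ℝ) : ℝ :=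
  sSup {r | ∃ ρ₀ ρ₁ : Matrix (Fin d) (Fin d) ℂ, IsDensity ρ₀ ∧ IsDensity ρ₁ ∧
    ((ρ₀ * H).trace).re ≤ E ∧ ((ρ₁ * H).trace).re ≤ E ∧
    traceNorm (ρ₀ - ρ₁) ≤ δ ∧ r = traceNorm (Φ ρ₀ - Φ ρ₁)}

/- ## Auxiliary lemmas -/

open Matrix in
lemma two_mul_sqrt (t : ℝ) : 2 * Real.sqrt t = Real.sqrt (4*t) := by
  rw [Real.sqrt_mul (by norm_num : (0:ℝ) ≤ 4) t,
    show Real.sqrt 4 = 2 by rw [show (4:ℝ) = 2^2 by norm_num, Real.sqrt_sq (by norm_num)]]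

lemma herm_eig_of_eq_smul {B : Matrix (Fin 2) (Fin 2) ℂ} (hB : B.IsHermitian) (c : ℝ)
    (h : B = (c:ℂ) • 1) (i : Fin 2) : hB.eigenvalues i = c := by
  have hd := hB.conjStarAlgAut_star_eigenvectorUnitary
  have h2 : Matrix.diagonal (RCLike.ofReal ∘ hB.eigenvalues) = (c:ℂ) • (1 : Matrix (Fin 2) (Fin 2) ℂ) := by
    rw [← hd]
    calc _ = (Unitary.conjStarAlgAut ℂ _ (star hB.eigenvectorUnitary)) ((c:ℂ) • 1) := by
          rw [← h]
      _ = _ := by rw [map_smul, map_one]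
  have := congrFun (congrFun h2 i) i
  simpa using this

lemma smul_one_posSemidef (c : ℝ) (hc : 0 ≤ c) :
    ((c : ℂ) • (1 : Matrix (Fin 2) (Fin 2) ℂ)).PosSemidef := by
  have h : (c : ℂ) • (1 : Matrix (Fin 2) (Fin 2) ℂ) = Matrix.diagonal (fun _ => (c:ℂ)) := by
    ext i j
    by_cases hij : i = j <;> simp [Matrix.one_apply, hij]
  rw [h]
  exact Matrix.PosSemidef.diagonal (fun i => by positivity)

lemma traceNorm_herm (x : ℝ) (z : ℂ) :
    traceNorm !![(x:ℂ), z; starRingEnd ℂ z, (-x:ℂ)] = 2 * Real.sqrt (x^2 + Complex.normSq z) := by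
  set A : Matrix (Fin 2) (Fin 2) ℂ := !![(x:ℂ), z; starRingEnd ℂ z, (-x:ℂ)] with hA
  have key : A.conjTranspose * A = ((x^2 + Complex.normSq z : ℝ) : ℂ) • 1 := by
    ext i j
    fin_cases i <;> fin_cases j <;>
      simp [hA, Matrix.mul_apply, Fin.sum_univ_two, Matrix.conjTranspose_apply,
        Matrix.one_apply, Complex.normSq, Complex.ext_iff] <;> ring_nf <;>
        simp [← Complex.ofReal_pow]
  have hc : (0:ℝ) ≤ x^2 + Complex.normSq z := add_nonneg (sq_nonneg x) (Complex.normSq_nonneg z)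
  have heig : ∀ i, (Matrix.posSemidef_conjTranspose_mul_self A).1.eigenvalues i
      = x^2 + Complex.normSq z := fun i => herm_eig_of_eq_smul _ _ key i
  unfold traceNorm
  rw [Matrix.trace_mul_cycle, Unitary.coe_star_mul_self, one_mul]
  simp [Matrix.trace, Matrix.diag, Fin.sum_univ_two, heig]

open Matrix in
lemma herm2_posSemidef (p q : ℝ) (z : ℂ) (hp : 0 ≤ p) (hq : 0 ≤ q)
    (hz : Complex.normSq z ≤ p * q) :
    (!![(p:ℂ), z; starRingEnd ℂ z, (q:ℂ)]).PosSemidef := by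
  rw [Matrix.posSemidef_iff_dotProduct_mulVec]
  constructor
  · ext i j
    fin_cases i <;> fin_cases j <;>
      simp [Matrix.conjTranspose_apply, Complex.ext_iff]
  · intro x
    have hx : star x ⬝ᵥ (!![(p:ℂ), z; starRingEnd ℂ z, (q:ℂ)] *ᵥ x)
        = ((p * Complex.normSq (x 0) + q * Complex.normSq (x 1)
            + 2 * (starRingEnd ℂ (x 0) * z * x 1).re : ℝ) : ℂ) := by
      simp only [dotProduct, Matrix.mulVec, Fin.sum_univ_two, Pi.star_apply]
      rw [Complex.ext_iff]
      constructor <;>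
        simp [Matrix.cons_val_zero, Matrix.cons_val_one, Complex.normSq, Complex.add_re,
          Complex.mul_re, Complex.mul_im] <;> ring
    rw [hx]
    rw [Complex.zero_le_real]
    set u := starRingEnd ℂ (x 0) * z * x 1 with hu
    have h1 : -‖u‖ ≤ u.re := by
      have := Complex.abs_re_le_norm u
      rw [abs_le] at this
      exact this.1
    have h2 : ‖u‖ = ‖x 0‖ * ‖z‖ * ‖x 1‖ := by
      rw [hu, norm_mul, norm_mul, Complex.norm_conj]
    have h3 : ‖z‖ ≤ Real.sqrt p * Real.sqrt q := by
      rw [← Real.sqrt_sq (norm_nonneg z), ← Real.sqrt_mul hp]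
      exact Real.sqrt_le_sqrt (by rwa [← Complex.sq_norm] at hz)
    have h4 : Complex.normSq (x 0) = ‖x 0‖ ^ 2 := (Complex.sq_norm _).symm
    have h5 : Complex.normSq (x 1) = ‖x 1‖ ^ 2 := (Complex.sq_norm _).symm
    have hsp : Real.sqrt p ^ 2 = p := Real.sq_sqrt hp
    have hsq2 : Real.sqrt q ^ 2 = q := Real.sq_sqrt hq
    rw [h4, h5]
    nlinarith [sq_nonneg (Real.sqrt p * ‖x 0‖ - Real.sqrt q * ‖x 1‖),
      norm_nonneg (x 0), norm_nonneg (x 1), norm_nonneg u,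
      norm_nonneg z, Real.sqrt_nonneg p, Real.sqrt_nonneg q,
      mul_nonneg (norm_nonneg (x 0)) (norm_nonneg (x 1)),
      mul_le_mul_of_nonneg_right h3 (mul_nonneg (norm_nonneg (x 0)) (norm_nonneg (x 1)))]

lemma blochState_explicit (w₁ w₃ : ℝ) :
    blochState w₁ 0 w₃ = !![(((1+w₃)/2 : ℝ):ℂ), (((w₁/2 : ℝ)):ℂ);
      starRingEnd ℂ (((w₁/2 : ℝ)):ℂ), (((1-w₃)/2 : ℝ):ℂ)] := by
  ext i j
  fin_cases i <;> fin_cases j <;>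
    simp [blochState, pauli1, pauli2, pauli3, Matrix.one_apply, Complex.ext_iff,
      map_ofNat] <;> ring_nf

lemma blochState_density (w₁ w₃ : ℝ) (h : w₁^2 + w₃^2 ≤ 1) :
    IsDensity (blochState w₁ 0 w₃) := by
  have h3 : w₃^2 ≤ 1 := by nlinarith [sq_nonneg w₁]
  have h3' : -1 ≤ w₃ ∧ w₃ ≤ 1 := abs_le.mp (abs_le_one_iff_mul_self_le_one.mpr (by nlinarith))
  rw [IsDensity, blochState_explicit]
  constructor
  · apply herm2_posSemidef _ _ _ (by linarith [h3'.1, h3'.2]) (by linarith [h3'.2])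
    rw [Complex.normSq_ofReal]
    nlinarith
  · simp [Matrix.trace, Matrix.diag, Fin.sum_univ_two, Complex.ext_iff]
    ring

lemma blochState_energy (w₁ w₃ : ℝ) :
    (((blochState w₁ 0 w₃) * pauli3).trace).re = w₃ := by
  rw [blochState_explicit]
  simp [Matrix.trace, Matrix.diag, Matrix.mul_apply, Fin.sum_univ_two, pauli3]
  ring

lemma blochState_combo (w₁ w₂ w₃ : ℝ) :
    blochState w₁ w₂ w₃ = ((1/2 : ℝ) : ℂ) • (1 : Matrix (Fin 2) (Fin 2) ℂ)
      + ((w₁/2 : ℝ) : ℂ) • pauli1 + ((w₂/2 : ℝ) : ℂ) • pauli2 + ((w₃/2 : ℝ) : ℂ) • pauli3 := by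
  unfold blochState
  push_cast
  module

lemma dephasing_bloch {a : ℝ} {Φ : Matrix (Fin 2) (Fin 2) ℂ →ₗ[ℂ] Matrix (Fin 2) (Fin 2) ℂ}
    (hΦ : IsDephasing a Φ) (w₁ w₃ : ℝ) :
    Φ (blochState w₁ 0 w₃) = blochState (a * w₁) 0 w₃ := by
  have h := hΦ ![1/2, w₁/2, 0, w₃/2]
  simp only [Matrix.cons_val_zero, Matrix.cons_val_one, Matrix.head_cons,
    Matrix.cons_val_two, Matrix.tail_cons, Matrix.cons_val_three] at h
  rw [blochState_combo, blochState_combo]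
  rw [show ((0:ℝ)/2 : ℝ) = (0:ℝ) by ring] at *
  convert h using 2 <;> push_cast <;> ring_nf

lemma traceNorm_bloch_diff (u₁ u₃ v₁ v₃ : ℝ) :
    traceNorm (blochState u₁ 0 u₃ - blochState v₁ 0 v₃)
      = Real.sqrt ((u₃ - v₃)^2 + (u₁ - v₁)^2) := by
  have hd : blochState u₁ 0 u₃ - blochState v₁ 0 v₃
      = !![(((u₃ - v₃)/2 : ℝ):ℂ), (((u₁ - v₁)/2 : ℝ):ℂ);
          starRingEnd ℂ (((u₁ - v₁)/2 : ℝ):ℂ), ((-((u₃ - v₃)/2) : ℝ):ℂ)] := by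
    rw [blochState_explicit, blochState_explicit]
    ext i j
    fin_cases i <;> fin_cases j <;>
      simp [Complex.ext_iff, Complex.sub_re, Complex.sub_im, map_ofNat] <;> ring
  rw [hd]
  have hth := traceNorm_herm ((u₃ - v₃)/2) (((u₁ - v₁)/2 : ℝ):ℂ)
  rw [show ((-((u₃ - v₃)/2) : ℝ):ℂ) = (-(((u₃ - v₃)/2 : ℝ)):ℂ) by push_cast; ring] at *
  rw [hth, Complex.normSq_ofReal, two_mul_sqrt]
  congr 1
  ring
open Matrix in
lemma pauliCombo_explicit (c₀ c₁ c₂ c₃ : ℝ) :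
    (c₀:ℂ) • (1 : Matrix (Fin 2) (Fin 2) ℂ) + (c₁:ℂ) • pauli1 + (c₂:ℂ) • pauli2
      + (c₃:ℂ) • pauli3
    = !![((c₀+c₃:ℝ):ℂ), (c₁:ℂ) - (c₂:ℂ)*Complex.I;
        (c₁:ℂ) + (c₂:ℂ)*Complex.I, ((c₀-c₃:ℝ):ℂ)] := by
  ext i j
  fin_cases i <;> fin_cases j <;>
    simp [pauli1, pauli2, pauli3, Matrix.one_apply, Complex.ext_iff] <;> ring

open Matrix in
lemma density_facts {ρ : Matrix (Fin 2) (Fin 2) ℂ} (h : IsDensity ρ) :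
    ρ 1 0 = starRingEnd ℂ (ρ 0 1) ∧ (ρ 0 0).im = 0 ∧ (ρ 1 1).im = 0 ∧
    0 ≤ (ρ 0 0).re ∧ 0 ≤ (ρ 1 1).re ∧ (ρ 0 0).re + (ρ 1 1).re = 1 ∧
    ‖ρ 0 1‖ ≤ 1/2 := by
  obtain ⟨hpsd', htr⟩ := h
  obtain ⟨hherm, hpsd⟩ := Matrix.posSemidef_iff_dotProduct_mulVec.mp hpsd'
  have h10 : ρ 1 0 = starRingEnd ℂ (ρ 0 1) := by
    conv_lhs => rw [← hherm]
    simp [Matrix.conjTranspose_apply]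
  have h00 : (ρ 0 0).im = 0 := by
    have := congrFun (congrFun hherm 0) 0
    simp only [Matrix.conjTranspose_apply] at this
    have := congrArg Complex.im this
    simp at this
    linarith
  have h11 : (ρ 1 1).im = 0 := by
    have := congrFun (congrFun hherm 1) 1
    simp only [Matrix.conjTranspose_apply] at this
    have := congrArg Complex.im this
    simp at this
    linarith
  have hre0 : 0 ≤ (ρ 0 0).re := by
    have key := hpsd ![1, 0]
    simp [dotProduct, Matrix.mulVec, Fin.sum_univ_two] at key
    exact (Complex.le_def.mp key).1
  have hre1 : 0 ≤ (ρ 1 1).re := by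
    have key := hpsd ![0, 1]
    simp [dotProduct, Matrix.mulVec, Fin.sum_univ_two] at key
    exact (Complex.le_def.mp key).1
  have hsum : (ρ 0 0).re + (ρ 1 1).re = 1 := by
    have := congrArg Complex.re htr
    simpa [Matrix.trace, Matrix.diag, Fin.sum_univ_two] using this
  refine ⟨h10, h00, h11, hre0, hre1, hsum, ?_⟩
  set z := ρ 0 1 with hz
  set r := ‖z‖ with hr
  have hrnn : 0 ≤ r := norm_nonneg z
  have key := hpsd ![z, (-r : ℂ)]
  simp only [dotProduct, Matrix.mulVec, Fin.sum_univ_two, Pi.star_apply,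
    Matrix.cons_val_zero, Matrix.cons_val_one, Matrix.head_cons] at key
  have keyre := (Complex.le_def.mp key).1
  rw [h10] at keyre
  have hzz : z.re^2 + z.im^2 = r^2 := by
    rw [hr, Complex.sq_norm, Complex.normSq]
    simp [pow_two]
  simp only [Complex.add_re, Complex.mul_re, Complex.mul_im, Complex.add_im,
    Complex.neg_re, Complex.neg_im, Complex.ofReal_re, Complex.ofReal_im,
    Complex.zero_re, RingHom.coe_coe, Complex.star_def,
    Complex.conj_re, Complex.conj_im] at keyre
  by_contra hcon
  push_neg at hcon
  have hr2 : 0 < r^2 := by positivity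
  nlinarith [keyre, hzz, hsum, hre0, hre1, hr2, sq_nonneg z.re, sq_nonneg z.im]

set_option maxHeartbeats 1000000 in
open Matrix in
lemma dobrushin_bddAbove (a : ℝ) (ha : a ∈ Set.Icc (0:ℝ) 1)
    (Φ : Matrix (Fin 2) (Fin 2) ℂ →ₗ[ℂ] Matrix (Fin 2) (Fin 2) ℂ) (hΦ : IsDephasing a Φ)
    (E δ : ℝ) :
    BddAbove {r | ∃ ρ₀ ρ₁ : Matrix (Fin 2) (Fin 2) ℂ, IsDensity ρ₀ ∧ IsDensity ρ₁ ∧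
      ((ρ₀ * pauli3).trace).re ≤ E ∧ ((ρ₁ * pauli3).trace).re ≤ E ∧
      traceNorm (ρ₀ - ρ₁) ≤ δ ∧ r = traceNorm (Φ ρ₀ - Φ ρ₁)} := by
  refine ⟨4, fun r hr => ?_⟩
  obtain ⟨ρ₀, ρ₁, h₀, h₁, -, -, -, hr⟩ := hr
  obtain ⟨h10₀, h00₀, h11₀, hre0₀, hre1₀, hsum₀, hoff₀⟩ := density_facts h₀
  obtain ⟨h10₁, h00₁, h11₁, hre0₁, hre1₁, hsum₁, hoff₁⟩ := density_facts h₁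
  obtain ⟨c₁, hc₁⟩ : ∃ c : ℝ, c = (ρ₀ 0 1 - ρ₁ 0 1).re := ⟨_, rfl⟩
  obtain ⟨c₂, hc₂⟩ : ∃ c : ℝ, c = -(ρ₀ 0 1 - ρ₁ 0 1).im := ⟨_, rfl⟩
  obtain ⟨c₃, hc₃⟩ : ∃ c : ℝ, c = (ρ₀ 0 0 - ρ₁ 0 0).re := ⟨_, rfl⟩
  have e00 : ρ₀ 0 0 - ρ₁ 0 0 = ((0 + c₃ : ℝ):ℂ) := by
    rw [Complex.ext_iff]
    constructor
    · simp [hc₃]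
    · simp [Complex.sub_im, h00₀, h00₁]
  have e01 : ρ₀ 0 1 - ρ₁ 0 1 = (c₁:ℂ) - (c₂:ℂ)*Complex.I := by
    rw [Complex.ext_iff]
    constructor <;> simp [hc₁, hc₂] <;> ring
  have e10 : ρ₀ 1 0 - ρ₁ 1 0 = (c₁:ℂ) + (c₂:ℂ)*Complex.I := by
    rw [h10₀, h10₁, ← map_sub, Complex.ext_iff]
    constructor <;> simp [hc₁, hc₂] <;> ring
  have e11 : ρ₀ 1 1 - ρ₁ 1 1 = ((0 - c₃ : ℝ):ℂ) := by
    rw [Complex.ext_iff]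
    constructor
    · simp only [Complex.sub_re, Complex.ofReal_re]
      rw [hc₃]
      simp only [Complex.sub_re]
      linarith
    · simp [Complex.sub_im, h11₀, h11₁]
  have hD : ρ₀ - ρ₁ = ((0:ℝ):ℂ) • (1 : Matrix (Fin 2) (Fin 2) ℂ) + (c₁:ℂ) • pauli1
      + (c₂:ℂ) • pauli2 + (c₃:ℂ) • pauli3 := by
    rw [pauliCombo_explicit, Matrix.eta_fin_two (ρ₀ - ρ₁)]
    simp only [Matrix.sub_apply]
    rw [e00, e01, e10, e11]
  have hΦh := hΦ ![0, c₁, c₂, c₃]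
  simp only [Matrix.cons_val_zero, Matrix.cons_val_one, Matrix.head_cons,
    Matrix.cons_val_two, Matrix.tail_cons, Matrix.cons_val_three] at hΦh
  have hΦD : Φ ρ₀ - Φ ρ₁ = !![((0+c₃:ℝ):ℂ), ((a*c₁:ℝ):ℂ) - ((a*c₂:ℝ):ℂ)*Complex.I;
      ((a*c₁:ℝ):ℂ) + ((a*c₂:ℝ):ℂ)*Complex.I, ((0-c₃:ℝ):ℂ)] := by
    rw [← map_sub, hD, ← pauliCombo_explicit 0 (a*c₁) (a*c₂) c₃]
    push_cast
    push_cast at hΦh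
    exact hΦh
  have hform : Φ ρ₀ - Φ ρ₁ = !![((c₃:ℝ):ℂ), (((a*c₁:ℝ):ℂ) - ((a*c₂:ℝ):ℂ)*Complex.I);
      starRingEnd ℂ (((a*c₁:ℝ):ℂ) - ((a*c₂:ℝ):ℂ)*Complex.I), ((-c₃:ℝ):ℂ)] := by
    rw [hΦD]
    have e1 : ((0+c₃:ℝ):ℂ) = ((c₃:ℝ):ℂ) := by norm_num
    have e2 : ((a*c₁:ℝ):ℂ) + ((a*c₂:ℝ):ℂ)*Complex.I
        = starRingEnd ℂ (((a*c₁:ℝ):ℂ) - ((a*c₂:ℝ):ℂ)*Complex.I) := by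
      rw [Complex.ext_iff]
      constructor <;> simp
    have e3 : ((0-c₃:ℝ):ℂ) = ((-c₃:ℝ):ℂ) := by push_cast; ring
    rw [e1, e2, e3]
  rw [hr, hform]
  have hth := traceNorm_herm c₃ (((a*c₁:ℝ):ℂ) - ((a*c₂:ℝ):ℂ)*Complex.I)
  rw [show ((-c₃ : ℝ):ℂ) = (-(c₃:ℝ):ℂ) by push_cast; ring] at *
  rw [hth]
  -- now bound
  have hns : Complex.normSq (((a*c₁:ℝ):ℂ) - ((a*c₂:ℝ):ℂ)*Complex.I) = (a*c₁)^2 + (a*c₂)^2 := by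
    simp [Complex.normSq, pow_two]
  rw [hns]
  have habs₀ := Complex.abs_re_le_norm (ρ₀ 0 1)
  have habs₁ := Complex.abs_re_le_norm (ρ₁ 0 1)
  have him₀ := Complex.abs_im_le_norm (ρ₀ 0 1)
  have him₁ := Complex.abs_im_le_norm (ρ₁ 0 1)
  have hc₁b : c₁^2 + c₂^2 ≤ 1 := by
    have h1 : Complex.normSq (ρ₀ 0 1 - ρ₁ 0 1) = c₁^2 + c₂^2 := by
      rw [Complex.normSq_apply, hc₁, hc₂]
      simp only [Complex.sub_re, Complex.sub_im, pow_two]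
      ring
    rw [← h1, ← Complex.sq_norm]
    have := norm_sub_le (ρ₀ 0 1) (ρ₁ 0 1)
    nlinarith [norm_nonneg (ρ₀ 0 1 - ρ₁ 0 1), norm_nonneg (ρ₀ 0 1),
      norm_nonneg (ρ₁ 0 1)]
  have hc₃b : c₃^2 ≤ 1 := by
    rw [hc₃, Complex.sub_re]
    nlinarith [hre0₀, hre0₁, hsum₀, hsum₁, hre1₀, hre1₁]
  have hab : a^2 ≤ 1 := by nlinarith [ha.1, ha.2]
  have harg : c₃^2 + ((a*c₁)^2 + (a*c₂)^2) ≤ 4 := by nlinarith [sq_nonneg c₁, sq_nonneg c₂, sq_nonneg a, ha.1, ha.2]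
  have : Real.sqrt (c₃^2 + ((a*c₁)^2 + (a*c₂)^2)) ≤ 2 := by
    rw [show (2:ℝ) = Real.sqrt 4 by
      rw [show (4:ℝ) = 2^2 by norm_num, Real.sqrt_sq (by norm_num)]]
    exact Real.sqrt_le_sqrt harg
  linarith


set_option maxHeartbeats 1000000 in
/-- Regime III lower bound for the Dobrushin curve of the dephasing channel with `H = σ₃`,
`E ∈ [−1,0]` and `√(2(1 − |E|)) ≤ δ ≤ 2√(1 − |E|²)`: `F_E(δ) ≥ h_E(δ)` where
`h_E(δ) = √[(|E| + cos(2 arccos(δ/2) + arccos|E|))² + a²(√(1 − |E|²) + sin(2 arccos(δ/2) +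
arccos|E|))²]`. -/
theorem stmt_16 (a : ℝ) (ha : a ∈ Set.Icc (0 : ℝ) 1)
    (Φ : Matrix (Fin 2) (Fin 2) ℂ →ₗ[ℂ] Matrix (Fin 2) (Fin 2) ℂ) (hΦ : IsDephasing a Φ)
    (E : ℝ) (hE : E ∈ Set.Icc (-1 : ℝ) 0)
    (δ : ℝ) (hδ0 : Real.sqrt (2 * (1 - (-E))) ≤ δ)
    (hδ1 : δ ≤ 2 * Real.sqrt (1 - (-E) ^ 2)) :
    Real.sqrt (((-E) + Real.cos (2 * Real.arccos (δ / 2) + Real.arccos (-E))) ^ 2 +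
        a ^ 2 * (Real.sqrt (1 - (-E) ^ 2) +
          Real.sin (2 * Real.arccos (δ / 2) + Real.arccos (-E))) ^ 2) ≤
      dobrushinCurve (⇑Φ) pauli3 E δ := by
  obtain ⟨ha0, ha1⟩ := ha
  obtain ⟨hE1, hE2⟩ := hE
  set θ := Real.arccos (δ/2) with hθ
  set φ := Real.arccos (-E) with hφ
  set ψ := 2*θ + φ with hψ
  have hnE0 : 0 ≤ -E := by linarith
  have hnE1 : -E ≤ 1 := by linarith
  have h1E : 0 ≤ 1 - (-E)^2 := by nlinarith
  have hsE : 0 ≤ Real.sqrt (1 - (-E)^2) := Real.sqrt_nonneg _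
  have hsEsq : Real.sqrt (1 - (-E)^2)^2 = 1 - (-E)^2 := Real.sq_sqrt h1E
  have hδ0' : 0 ≤ δ := le_trans (Real.sqrt_nonneg _) hδ0
  have hδhalf : δ/2 ≤ Real.sqrt (1 - (-E)^2) := by linarith
  have hδsq : (δ/2)^2 ≤ 1 - (-E)^2 := by nlinarith
  have hδle1 : δ/2 ≤ 1 := by nlinarith
  have hcosθ : Real.cos θ = δ/2 := Real.cos_arccos (by linarith) hδle1
  have hsinθ : Real.sin θ = Real.sqrt (1 - (δ/2)^2) := Real.sin_arccos _
  have hsinθnn : 0 ≤ Real.sin θ := by rw [hsinθ]; exact Real.sqrt_nonneg _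
  have hcosφ : Real.cos φ = -E := Real.cos_arccos (by linarith) hnE1
  have hsinφ : Real.sin φ = Real.sqrt (1 - (-E)^2) := Real.sin_arccos _
  set ρ₀ := blochState (-Real.sin ψ) 0 (Real.cos ψ) with hρ₀
  set ρ₁ := blochState (Real.sqrt (1 - (-E)^2)) 0 E with hρ₁
  have hpyψ := Real.sin_sq_add_cos_sq ψ
  have hden₀ : IsDensity ρ₀ := blochState_density _ _ (by nlinarith)
  have hden₁ : IsDensity ρ₁ := blochState_density _ _ (by nlinarith)
  have hen₁ : ((ρ₁ * pauli3).trace).re ≤ E := le_of_eq (blochState_energy _ _)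
  -- energy bound for ρ₀
  have hctφ : Real.cos (θ+φ) ≤ 0 := by
    rw [Real.cos_add, hcosθ, hcosφ, hsinφ]
    have hL : 0 ≤ (δ/2)*(-E) := mul_nonneg (by linarith) hnE0
    have hR : Real.sin θ * Real.sqrt (1-(-E)^2) = Real.sqrt ((1-(δ/2)^2) * (1-(-E)^2)) := by
      rw [hsinθ, ← Real.sqrt_mul (by nlinarith)]
    have hle : (δ/2)*(-E) ≤ Real.sin θ * Real.sqrt (1-(-E)^2) := by
      rw [hR, ← Real.sqrt_sq hL]
      exact Real.sqrt_le_sqrt (by nlinarith)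
    linarith
  have hcψ : Real.cos ψ ≤ E := by
    have e1 := Real.cos_add (θ+φ) θ
    rw [show θ+φ+θ = ψ by rw [hψ]; ring] at e1
    have e2 := Real.cos_sub (θ+φ) θ
    rw [show θ+φ-θ = φ by ring] at e2
    have key : Real.cos ψ + Real.cos φ = 2 * (Real.cos (θ+φ) * Real.cos θ) := by
      rw [e1, e2]; ring
    rw [hcosθ] at key
    nlinarith [mul_nonneg (neg_nonneg.mpr hctφ) (show (0:ℝ) ≤ δ/2 by linarith)]
  have hen₀ : ((ρ₀ * pauli3).trace).re ≤ E := by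
    rw [hρ₀, blochState_energy]
    exact hcψ
  -- trace distance
  have hcos2θ : Real.cos (ψ - φ) = 2*(δ/2)^2 - 1 := by
    rw [show ψ - φ = 2*θ by rw [hψ]; ring, Real.cos_two_mul, hcosθ]
  have hkey : Real.cos ψ * (-E) + Real.sin ψ * Real.sqrt (1-(-E)^2) = 2*(δ/2)^2 - 1 := by
    rw [← hcos2θ, Real.cos_sub, hcosφ, hsinφ]
  have hdist : traceNorm (ρ₀ - ρ₁) = δ := by
    rw [hρ₀, hρ₁, traceNorm_bloch_diff]
    rw [show (Real.cos ψ - E)^2 + (-Real.sin ψ - Real.sqrt (1-(-E)^2))^2 = δ^2 by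
      linear_combination hpyψ + 2*hkey + hsEsq]
    exact Real.sqrt_sq hδ0'
  -- output distance
  have hout : Φ ρ₀ - Φ ρ₁
      = blochState (a * (-Real.sin ψ)) 0 (Real.cos ψ)
        - blochState (a * Real.sqrt (1-(-E)^2)) 0 E := by
    rw [hρ₀, hρ₁, dephasing_bloch hΦ, dephasing_bloch hΦ]
  have houtnorm : Real.sqrt (((-E) + Real.cos ψ) ^ 2 +
        a ^ 2 * (Real.sqrt (1 - (-E) ^ 2) + Real.sin ψ) ^ 2)
      = traceNorm (Φ ρ₀ - Φ ρ₁) := by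
    rw [hout, traceNorm_bloch_diff]
    congr 1
    ring
  rw [dobrushinCurve]
  exact le_csSup (dobrushin_bddAbove a ⟨ha0, ha1⟩ Φ hΦ E δ)
    ⟨ρ₀, ρ₁, hden₀, hden₁, hen₀, hen₁, le_of_eq hdist, houtnorm⟩
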